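/- Let s_1,…,s_n ∈ {0,1}^L and r ∈ ℕ. There exists a vector s ∈ {0,1}^L with δ(s, s_i) ≤ r for every i ∈ [n] if and only if the multiset M = {s_1,…,s_n, q} of vectors in {0,1,□}^L, where q = □^L is the all-missing vector, admits a completion M* (with witnessing bijection φ) containing a vector c ∈ M* such that δ(c, a) ≤ r for every a ∈ M*. (This is the correctness of the reduction from Closest String to In-Clustering-Completion with k = 1.) -/
import Mathlib


/-- `Mc` is a completion of `M`: a multiset of complete vectors in bijection with `M`,
agreeing with the corresponding vectors on all non-missing entries. -/
def IsCompletion {ι : Type} (M : Multiset (ι → Option Bool))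
    (Mc : Multiset (ι → Bool)) : Prop :=
  Multiset.Rel (fun a c => ∀ i (x : Bool), a i = some x → c i = x) M Mc

theorem statement_18 {L n : ℕ} (s : Fin n → Fin L → Bool) (r : ℕ) :
    (∃ c : Fin L → Bool, ∀ i : Fin n, hammingDist c (s i) ≤ r) ↔
    (∃ Mc : Multiset (Fin L → Bool),
      IsCompletion
        ((fun (_ : Fin L) => (none : Option Bool)) ::ₘ
          (Finset.univ : Finset (Fin n)).val.map (fun i j => some (s i j))) Mc ∧
      ∃ c ∈ Mc, ∀ a ∈ Mc, hammingDist c a ≤ r) := by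
  constructor
  · rintro ⟨c, hc⟩
    refine ⟨c ::ₘ (Finset.univ : Finset (Fin n)).val.map s, ?_, c,
      Multiset.mem_cons_self _ _, ?_⟩
    · refine Multiset.Rel.cons (fun i x h => by simp at h) ?_
      rw [Multiset.rel_map]
      exact Multiset.rel_refl_of_refl_on (fun i _ j x h => by
        exact Option.some.inj h)
    · intro a ha
      rcases Multiset.mem_cons.1 ha with h | h
      · simp [h]
      · rcases Multiset.mem_map.1 h with ⟨i, _, rfl⟩
        exact hc i
  · rintro ⟨Mc, hcomp, c, hcMc, hcenter⟩
    obtain ⟨b, N', -, hrel, rfl⟩ := Multiset.rel_cons_left.1 hcomp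
    have hN' : (Finset.univ : Finset (Fin n)).val.map s = N' := by
      rw [← Multiset.rel_eq]
      rw [Multiset.rel_map_left]
      rw [Multiset.rel_map_left] at hrel
      refine hrel.mono ?_
      intro i cv _ _ h
      funext j
      exact (h j (s i j) rfl).symm
    refine ⟨c, fun i => ?_⟩
    apply hcenter
    rw [Multiset.mem_cons, ← hN']
    exact Or.inr (Multiset.mem_map.2 ⟨i, Finset.mem_univ i, rfl⟩)
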